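/- Let σ be a signature on the complete graph K₅ with χ'(K₅,σ) = 4, and let γ be a proper 4-edge coloring of (K₅,σ) with color set {±1,±2}. Then the subgraph Σ₁ of edges colored ±1 under γ and the subgraph Σ₂ of edges colored ±2 under γ are both positive cycles of length five. -/

import Mathlib

open scoped Classical

/-- The color set `M_q`: for `q = 2r`, `{±1, …, ±r}`; for `q = 2r+1`, `{0, ±1, …, ±r}`. -/
def colorSet (q : ℕ) : Set ℤ :=
  {c : ℤ | c.natAbs ≤ q / 2 ∧ (Even q → c ≠ 0)}

/-- A proper `q`-edge coloring of the signed graph `(G, σ)`, given as an assignment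
`γ v w` of a color to the incidence `(v, vw)`. -/
def IsProperSignedEdgeColoring {V : Type*} (G : SimpleGraph V)
    (σ : Sym2 V → ℤˣ) (q : ℕ) (γ : V → V → ℤ) : Prop :=
  (∀ ⦃v w : V⦄, G.Adj v w → γ v w ∈ colorSet q) ∧
  (∀ ⦃v w : V⦄, G.Adj v w → γ v w = (-(σ s(v, w) : ℤ)) * γ w v) ∧
  (∀ ⦃v w₁ w₂ : V⦄, G.Adj v w₁ → G.Adj v w₂ → w₁ ≠ w₂ → γ v w₁ ≠ γ v w₂)

/-- The chromatic index of a signed graph: the least `q` admitting a proper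
`q`-edge coloring. -/
noncomputable def signedChromaticIndex {V : Type*} (G : SimpleGraph V)
    (σ : Sym2 V → ℤˣ) : ℕ :=
  sInf {q : ℕ | ∃ γ : V → V → ℤ, IsProperSignedEdgeColoring G σ q γ}

/-- The `c`-graph `Σ_c`: the spanning subgraph of `G` consisting of the edges whose
incidences are colored `c` or `-c` under `γ`. -/
def colorClassGraph {V : Type*} (G : SimpleGraph V) (γ : V → V → ℤ) (c : ℤ) :
    SimpleGraph V where
  Adj v w := G.Adj v w ∧ (γ v w = c ∨ γ v w = -c) ∧ (γ w v = c ∨ γ w v = -c)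
  symm := ⟨fun v w h => ⟨h.1.symm, h.2.2, h.2.1⟩⟩
  loopless := ⟨fun v h => G.loopless.1 v h.1⟩

set_option synthInstance.maxSize 400 in
private lemma fin5_six (a b c d e f : Fin 5) : a ≠ b → a ≠ c → a ≠ d → a ≠ e → a ≠ f →
    b ≠ c → b ≠ d → b ≠ e → b ≠ f → c ≠ d → c ≠ e → c ≠ f → d ≠ e → d ≠ f → e ≠ f → False := by
  revert a b c d e f; decide

set_option synthInstance.maxSize 400 in
private lemma fin5_cover (a b c d e x : Fin 5) : a ≠ b → a ≠ c → a ≠ d → a ≠ e →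
    b ≠ c → b ≠ d → b ≠ e → c ≠ d → c ≠ e → d ≠ e → x = a ∨ x = b ∨ x = c ∨ x = d ∨ x = e := by
  revert a b c d e x; decide

private lemma fin5_avoid3 (a b c : Fin 5) : ∃ x : Fin 5, x ≠ a ∧ x ≠ b ∧ x ≠ c := by
  revert a b c; decide

private lemma fin5_avoid4 (a b c d : Fin 5) : ∃ x : Fin 5, x ≠ a ∧ x ≠ b ∧ x ≠ c ∧ x ≠ d := by
  revert a b c d; decide

/-- If `σ` is a signature on `K₅` with `χ'(K₅, σ) = 4` and `γ` is a
proper `4`-edge coloring of `(K₅, σ)` (with color set `{±1, ±2}`), then both `Σ₁`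
(edges colored `±1`) and `Σ₂` (edges colored `±2`) are positive cycles of length 5. -/
theorem signed_K5_color_classes (σ : Sym2 (Fin 5) → ℤˣ)
    (hσ : signedChromaticIndex (⊤ : SimpleGraph (Fin 5)) σ = 4)
    (γ : Fin 5 → Fin 5 → ℤ)
    (hγ : IsProperSignedEdgeColoring (⊤ : SimpleGraph (Fin 5)) σ 4 γ) :
    ∀ c : ℤ, c = 1 ∨ c = 2 →
      ∃ (v : Fin 5) (w : (⊤ : SimpleGraph (Fin 5)).Walk v v),
        w.IsCycle ∧ w.length = 5 ∧
        (∀ e : Sym2 (Fin 5),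
          e ∈ w.edges ↔ e ∈ (colorClassGraph (⊤ : SimpleGraph (Fin 5)) γ c).edgeSet) ∧
        (w.edges.map σ).prod = 1 := by
  obtain ⟨h1, h2, h3⟩ := hγ
  intro c hc
  have hc0 : c ≠ 0 := by rcases hc with rfl | rfl <;> norm_num
  have hcnc : c ≠ -c := by omega
  set H := colorClassGraph (⊤ : SimpleGraph (Fin 5)) γ c with hHdef
  have hmem : ∀ v w : Fin 5, v ≠ w → γ v w = 1 ∨ γ v w = -1 ∨ γ v w = 2 ∨ γ v w = -2 := by
    intro v w hvw
    obtain ⟨ha, hb⟩ := h1 (show (⊤ : SimpleGraph (Fin 5)).Adj v w by simpa using hvw)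
    have := hb (by decide)
    omega
  have hneg : ∀ v w : Fin 5, v ≠ w → γ w v = γ v w ∨ γ w v = -γ v w := by
    intro v w hvw
    have h := h2 (show (⊤ : SimpleGraph (Fin 5)).Adj w v by simpa using hvw.symm)
    rcases Int.units_eq_one_or (σ s(w, v)) with hu | hu <;> rw [hu] at h <;> push_cast at h
    · right; linarith
    · left; linarith
  have hadj : ∀ v w : Fin 5, H.Adj v w ↔ v ≠ w ∧ (γ v w = c ∨ γ v w = -c) := by
    intro v w
    constructor
    · rintro ⟨ha, hb, -⟩; exact ⟨by simpa using ha, hb⟩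
    · rintro ⟨hvw, hcol⟩
      refine ⟨by simpa using hvw, hcol, ?_⟩
      rcases hneg v w hvw with h | h <;> rcases hcol with h' | h' <;> omega
  have huniq : ∀ v w w' : Fin 5, w ≠ v → w' ≠ v → γ v w = γ v w' → w = w' := by
    intro v w w' hw hw' he
    by_contra hne
    exact h3 (by simpa using hw.symm) (by simpa using hw'.symm) hne he
  have hex : ∀ (v : Fin 5) (d : ℤ), d = c ∨ d = -c → ∃ w, w ≠ v ∧ γ v w = d := by
    intro v d hd
    have hinj : Set.InjOn (γ v) (Finset.univ.erase v : Finset (Fin 5)) := by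
      intro a ha b hb hab
      simp only [Finset.coe_erase, Set.mem_diff, Set.mem_singleton_iff, Finset.coe_univ,
        Set.mem_univ, true_and] at ha hb
      exact huniq v a b ha hb hab
    have hcard : ((Finset.univ.erase v).image (γ v)).card = 4 := by
      rw [Finset.card_image_of_injOn hinj]
      simp [Finset.card_erase_of_mem]
    have hsub : (Finset.univ.erase v).image (γ v) ⊆ ({1, -1, 2, -2} : Finset ℤ) := by
      intro x hx
      simp only [Finset.mem_image, Finset.mem_erase] at hx
      obtain ⟨w, ⟨hw, -⟩, rfl⟩ := hx
      have := hmem v w (Ne.symm hw)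
      simp only [Finset.mem_insert, Finset.mem_singleton]
      tauto
    have heq : (Finset.univ.erase v).image (γ v) = ({1, -1, 2, -2} : Finset ℤ) :=
      Finset.eq_of_subset_of_card_le hsub (by rw [hcard]; decide)
    have hdmem : d ∈ (Finset.univ.erase v).image (γ v) := by
      rw [heq]; rcases hc with rfl | rfl <;> rcases hd with rfl | rfl <;> decide
    simp only [Finset.mem_image, Finset.mem_erase] at hdmem
    obtain ⟨w, ⟨hw, -⟩, he⟩ := hdmem
    exact ⟨w, hw, he⟩
  choose p hp hpc using fun v => hex v c (Or.inl rfl)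
  choose m hm hmc using fun v => hex v (-c) (Or.inr rfl)
  have hpm : ∀ v, p v ≠ m v := fun v h => hcnc ((hpc v).symm.trans (by rw [h]; exact hmc v))
  have hnbr : ∀ v w, H.Adj v w ↔ w = p v ∨ w = m v := by
    intro v w
    rw [hadj]
    constructor
    · rintro ⟨hvw, hcol | hcol⟩
      · exact Or.inl (huniq v w (p v) (Ne.symm hvw) (hp v) (by rw [hcol, hpc]))
      · exact Or.inr (huniq v w (m v) (Ne.symm hvw) (hm v) (by rw [hcol, hmc]))
    · rintro (rfl | rfl)
      · exact ⟨Ne.symm (hp v), Or.inl (hpc v)⟩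
      · exact ⟨Ne.symm (hm v), Or.inr (hmc v)⟩
  have hthird : ∀ v a b x : Fin 5, H.Adj v a → H.Adj v b → a ≠ b → H.Adj v x →
      x = a ∨ x = b := by
    intro v a b x ha hb hab hx
    rw [hnbr] at ha hb hx
    rcases ha with rfl | rfl <;> rcases hb with rfl | rfl <;> rcases hx with h | h <;> tauto
  have hdeg : ∀ v a b d : Fin 5, H.Adj v a → H.Adj v b → H.Adj v d →
      a ≠ b → a ≠ d → b ≠ d → False := by
    intro v a b d ha hb hd hab had hbd
    rcases hthird v a b d ha hb hab hd with rfl | rfl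
    · exact had rfl
    · exact hbd rfl
  have ho : ∀ u v : Fin 5, H.Adj u v → ∃ x, H.Adj v x ∧ x ≠ u := by
    intro u v h
    rcases (hnbr v u).mp h.symm with hu | hu
    · exact ⟨m v, (hnbr v (m v)).mpr (Or.inr rfl), by rw [hu]; exact Ne.symm (hpm v)⟩
    · exact ⟨p v, (hnbr v (p v)).mpr (Or.inl rfl), by rw [hu]; exact hpm v⟩
  set v0 : Fin 5 := 0 with hv0
  set v1 : Fin 5 := p v0 with hv1
  have h01 : H.Adj v0 v1 := (hnbr v0 v1).mpr (Or.inl rfl)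
  obtain ⟨v2, h12, h20⟩ := ho v0 v1 h01
  obtain ⟨v3, h23, h31⟩ := ho v1 v2 h12
  obtain ⟨v4, h34, h42⟩ := ho v2 v3 h23
  obtain ⟨v5, h45, h53⟩ := ho v3 v4 h34
  have n01 : v0 ≠ v1 := h01.ne
  have n12 : v1 ≠ v2 := h12.ne
  have n02 : v0 ≠ v2 := Ne.symm h20
  have n23 : v2 ≠ v3 := h23.ne
  have n13 : v1 ≠ v3 := Ne.symm h31
  have n03 : v0 ≠ v3 := by
    intro h
    rw [← h] at h23
    obtain ⟨x, hx0, hx1, hx2⟩ := fin5_avoid3 v0 v1 v2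
    have hxp : H.Adj x (p x) := (hnbr x (p x)).mpr (Or.inl rfl)
    have hxm : H.Adj x (m x) := (hnbr x (m x)).mpr (Or.inr rfl)
    have key : ∀ z, H.Adj x z → z ≠ v0 ∧ z ≠ v1 ∧ z ≠ v2 := by
      intro z hz
      refine ⟨?_, ?_, ?_⟩ <;> intro hzz <;> rw [hzz] at hz
      · exact hdeg v0 v1 v2 x h01 h23.symm hz.symm n12 (Ne.symm hx1) (Ne.symm hx2)
      · exact hdeg v1 v0 v2 x h01.symm h12 hz.symm n02 (Ne.symm hx0) (Ne.symm hx2)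
      · exact hdeg v2 v1 v0 x h12.symm h23 hz.symm (Ne.symm n01) (Ne.symm hx1) (Ne.symm hx0)
    obtain ⟨k1a, k1b, k1c⟩ := key (p x) hxp
    obtain ⟨k2a, k2b, k2c⟩ := key (m x) hxm
    exact fin5_six v0 v1 v2 x (p x) (m x) n01 n02 (Ne.symm hx0) (Ne.symm k1a) (Ne.symm k2a)
      n12 (Ne.symm hx1) (Ne.symm k1b) (Ne.symm k2b) (Ne.symm hx2) (Ne.symm k1c) (Ne.symm k2c)
      hxp.ne hxm.ne (hpm x)
  have n34 : v3 ≠ v4 := h34.ne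
  have n24 : v2 ≠ v4 := Ne.symm h42
  have n14 : v1 ≠ v4 := by
    intro h
    rw [← h] at h34
    exact hdeg v1 v0 v2 v3 h01.symm h12 h34.symm n02 n03 n23
  have n04 : v0 ≠ v4 := by
    intro h
    rw [← h] at h34
    obtain ⟨x, hx0, hx1, hx2, hx3⟩ := fin5_avoid4 v0 v1 v2 v3
    have hxp : H.Adj x (p x) := (hnbr x (p x)).mpr (Or.inl rfl)
    have key : ∀ z, H.Adj x z → z ≠ v0 ∧ z ≠ v1 ∧ z ≠ v2 ∧ z ≠ v3 := by
      intro z hz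
      refine ⟨?_, ?_, ?_, ?_⟩ <;> intro hzz <;> rw [hzz] at hz
      · exact hdeg v0 v1 v3 x h01 h34.symm hz.symm n13 (Ne.symm hx1) (Ne.symm hx3)
      · exact hdeg v1 v0 v2 x h01.symm h12 hz.symm n02 (Ne.symm hx0) (Ne.symm hx2)
      · exact hdeg v2 v1 v3 x h12.symm h23 hz.symm n13 (Ne.symm hx1) (Ne.symm hx3)
      · exact hdeg v3 v2 v0 x h23.symm h34 hz.symm (Ne.symm n02) (Ne.symm hx2) (Ne.symm hx0)
    obtain ⟨k1a, k1b, k1c, k1d⟩ := key (p x) hxp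
    exact fin5_six v0 v1 v2 v3 x (p x) n01 n02 n03 (Ne.symm hx0) (Ne.symm k1a)
      n12 n13 (Ne.symm hx1) (Ne.symm k1b) n23 (Ne.symm hx2) (Ne.symm k1c)
      (Ne.symm hx3) (Ne.symm k1d) hxp.ne
  have n51 : v5 ≠ v1 := by
    intro h
    rw [h] at h45
    exact hdeg v1 v0 v2 v4 h01.symm h12 h45.symm n02 n04 n24
  have n52 : v5 ≠ v2 := by
    intro h
    rw [h] at h45
    exact hdeg v2 v1 v3 v4 h12.symm h23 h45.symm n13 n14 n34
  have h50 : v5 = v0 := by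
    rcases fin5_cover v0 v1 v2 v3 v4 v5 n01 n02 n03 n04 n12 n13 n14 n23 n24 n34 with
      h | h | h | h | h
    · exact h
    · exact absurd h n51
    · exact absurd h n52
    · exact absurd h h53
    · exact absurd h (Ne.symm h45.ne)
  rw [h50] at h45
  have h40 : H.Adj v4 v0 := h45
  clear h53 n51 n52 h45 h50
  clear hσ hmem hneg huniq hex hp hpc hm hmc hpm ho hnbr hdeg h1 hHdef hv0 hv1
  clear_value H v0 v1
  have t01 : (⊤ : SimpleGraph (Fin 5)).Adj v0 v1 := by simpa using n01
  have t12 : (⊤ : SimpleGraph (Fin 5)).Adj v1 v2 := by simpa using n12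
  have t23 : (⊤ : SimpleGraph (Fin 5)).Adj v2 v3 := by simpa using n23
  have t34 : (⊤ : SimpleGraph (Fin 5)).Adj v3 v4 := by simpa using n34
  have t40 : (⊤ : SimpleGraph (Fin 5)).Adj v4 v0 := by simpa using (Ne.symm n04)
  refine ⟨v0, SimpleGraph.Walk.cons t01 (SimpleGraph.Walk.cons t12 (SimpleGraph.Walk.cons t23
    (SimpleGraph.Walk.cons t34 (SimpleGraph.Walk.cons t40 SimpleGraph.Walk.nil)))),
    ?_, ?_, ?_, ?_⟩
  · clear h2 h3 hadj hthird
    rw [SimpleGraph.Walk.isCycle_def]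
    refine ⟨?_, by simp, ?_⟩
    · rw [SimpleGraph.Walk.isTrail_def]
      simp only [SimpleGraph.Walk.edges_cons, SimpleGraph.Walk.edges_nil, List.nodup_cons,
        List.mem_cons, List.not_mem_nil, or_false, List.nodup_nil, and_true, Sym2.eq_iff,
        not_or]
      tauto
    · simp only [SimpleGraph.Walk.support_cons, SimpleGraph.Walk.support_nil, List.tail_cons,
        List.nodup_cons, List.mem_cons, List.not_mem_nil, or_false, List.nodup_nil, and_true,
        not_or]
      tauto
  · clear h2 h3 hadj hthird
    simp
  · clear h2 h3 hadj
    intro e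
    induction e using Sym2.ind with
    | _ a b =>
      simp only [SimpleGraph.Walk.edges_cons, SimpleGraph.Walk.edges_nil, List.mem_cons,
        List.not_mem_nil, or_false, SimpleGraph.mem_edgeSet]
      constructor
      · rintro (h | h | h | h | h) <;> rw [Sym2.eq_iff] at h <;>
          rcases h with ⟨ha', hb'⟩ | ⟨ha', hb'⟩ <;> rw [ha', hb']
        · exact h01
        · exact h01.symm
        · exact h12
        · exact h12.symm
        · exact h23
        · exact h23.symm
        · exact h34
        · exact h34.symm
        · exact h40
        · exact h40.symm
      · intro he
        rcases fin5_cover v0 v1 v2 v3 v4 a n01 n02 n03 n04 n12 n13 n14 n23 n24 n34 with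
          h | h | h | h | h <;> rw [h] at he ⊢
        · rcases hthird v0 v1 v4 b h01 h40.symm n14 he with h' | h' <;> rw [h']
          · left; rfl
          · right; right; right; right; exact Sym2.eq_swap
        · rcases hthird v1 v0 v2 b h01.symm h12 n02 he with h' | h' <;> rw [h']
          · left; exact Sym2.eq_swap
          · right; left; rfl
        · rcases hthird v2 v1 v3 b h12.symm h23 n13 he with h' | h' <;> rw [h']
          · right; left; exact Sym2.eq_swap
          · right; right; left; rfl
        · rcases hthird v3 v2 v4 b h23.symm h34 n24 he with h' | h' <;> rw [h']
          · right; right; left; exact Sym2.eq_swap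
          · right; right; right; left; rfl
        · rcases hthird v4 v3 v0 b h34.symm h40 n03.symm he with h' | h' <;> rw [h']
          · right; right; right; left; exact Sym2.eq_swap
          · right; right; right; right; rfl
  · -- sign computation
    set s0 := σ s(v0, v1) with hs0def
    set s1 := σ s(v1, v2) with hs1def
    set s2 := σ s(v2, v3) with hs2def
    set s3 := σ s(v3, v4) with hs3def
    set s4 := σ s(v4, v0) with hs4def
    clear_value s0 s1 s2 s3 s4
    have hflip : ∀ x y : ℤ, (x = c ∨ x = -c) → (y = c ∨ y = -c) → x ≠ y → x = -y := by
      intro x y hx hy hxy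
      rcases hx with rfl | rfl <;> rcases hy with rfl | rfl <;> omega
    have ca0 : γ v0 v1 = c ∨ γ v0 v1 = -c := ((hadj v0 v1).mp h01).2
    have ca1 : γ v1 v2 = c ∨ γ v1 v2 = -c := ((hadj v1 v2).mp h12).2
    have ca2 : γ v2 v3 = c ∨ γ v2 v3 = -c := ((hadj v2 v3).mp h23).2
    have ca3 : γ v3 v4 = c ∨ γ v3 v4 = -c := ((hadj v3 v4).mp h34).2
    have ca4 : γ v4 v0 = c ∨ γ v4 v0 = -c := ((hadj v4 v0).mp h40).2
    have cb0 : γ v1 v0 = c ∨ γ v1 v0 = -c := ((hadj v1 v0).mp h01.symm).2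
    have cb1 : γ v2 v1 = c ∨ γ v2 v1 = -c := ((hadj v2 v1).mp h12.symm).2
    have cb2 : γ v3 v2 = c ∨ γ v3 v2 = -c := ((hadj v3 v2).mp h23.symm).2
    have cb3 : γ v4 v3 = c ∨ γ v4 v3 = -c := ((hadj v4 v3).mp h34.symm).2
    have cb4 : γ v0 v4 = c ∨ γ v0 v4 = -c := ((hadj v0 v4).mp h40.symm).2
    have d0 : γ v1 v0 = -γ v1 v2 :=
      hflip _ _ cb0 ca1 (h3 (by simpa using n01.symm) t12 n02)
    have d1 : γ v2 v1 = -γ v2 v3 :=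
      hflip _ _ cb1 ca2 (h3 (by simpa using n12.symm) t23 n13)
    have d2 : γ v3 v2 = -γ v3 v4 :=
      hflip _ _ cb2 ca3 (h3 (by simpa using n23.symm) t34 n24)
    have d3 : γ v4 v3 = -γ v4 v0 :=
      hflip _ _ cb3 ca4 (h3 (by simpa using n34.symm) t40 n03.symm)
    have d4 : γ v0 v4 = -γ v0 v1 :=
      hflip _ _ cb4 ca0 (h3 (by simpa using n04) t01 n14.symm)
    have E0 : γ v0 v1 = (s0 : ℤ) * γ v1 v2 := by
      have h' := h2 t01; rw [← hs0def, d0] at h'; rw [h']; ring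
    have E1 : γ v1 v2 = (s1 : ℤ) * γ v2 v3 := by
      have h' := h2 t12; rw [← hs1def, d1] at h'; rw [h']; ring
    have E2 : γ v2 v3 = (s2 : ℤ) * γ v3 v4 := by
      have h' := h2 t23; rw [← hs2def, d2] at h'; rw [h']; ring
    have E3 : γ v3 v4 = (s3 : ℤ) * γ v4 v0 := by
      have h' := h2 t34; rw [← hs3def, d3] at h'; rw [h']; ring
    have E4 : γ v4 v0 = (s4 : ℤ) * γ v0 v1 := by
      have h' := h2 t40; rw [← hs4def, d4] at h'; rw [h']; ring
    have ha0ne : γ v0 v1 ≠ 0 := by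
      rcases ca0 with h | h <;> rw [h]
      · exact hc0
      · exact neg_ne_zero.mpr hc0
    have chain : γ v0 v1 = (s0 : ℤ) * ((s1 : ℤ) * ((s2 : ℤ) * ((s3 : ℤ) *
        ((s4 : ℤ) * γ v0 v1)))) := by
      conv_lhs => rw [E0, E1, E2, E3, E4]
    have hX : (s0 * (s1 * (s2 * (s3 * s4))) : ℤˣ) = 1 := by
      apply Units.ext
      push_cast
      have h' : ((s0 : ℤ) * ((s1 : ℤ) * ((s2 : ℤ) * ((s3 : ℤ) * (s4 : ℤ))))) * γ v0 v1 =
          1 * γ v0 v1 := by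
        rw [one_mul]
        conv_rhs => rw [chain]
        ring
      exact mul_right_cancel₀ ha0ne h'
    simp only [SimpleGraph.Walk.edges_cons, SimpleGraph.Walk.edges_nil, List.map_cons,
      List.map_nil, List.prod_cons, List.prod_nil, mul_one]
    rw [← hs0def, ← hs1def, ← hs2def, ← hs3def, ← hs4def]
    exact hX
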